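/- Chain rule for a multivariate outer function: Let X, Y₀, …, Y_k and Z be real locally convex topological vector spaces. Let g₀ : X → Y₀, …, g_k : X → Y_k each have a chain differential δg_i(x;η) at the point x ∈ X in the direction η ∈ X. Let F : Y₀ × … × Y_k → Z be such that, on an open neighbourhood Ω of the point (g₀(x), …, g_k(x)), each partial chain differential δ_i F(z; ξ) exists for all z ∈ Ω and all directions ξ ∈ Y_i, and each map (z, ξ) ↦ δ_i F(z; ξ) is continuous on Ω × Y_i. Then the map u ↦ F(g₀(u), …, g_k(u)) has a chain differential at x in the direction η, equal to Σ_{i=0}^{k} δ_i F( (g₀(x), …, g_k(x)); δg_i(x;η) ). -/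

import Mathlib

open Filter Topology

/-- `f` has chain differential `v` at the point `x` in the direction `η`:
for every sequence `ηm → η` and every sequence of nonzero reals `θm → 0`,
`θm⁻¹ • (f (x + θm • ηm) - f x) → v`. -/
def HasChainDiff {X Y : Type*} [AddCommGroup X] [Module ℝ X] [TopologicalSpace X]
    [AddCommGroup Y] [Module ℝ Y] [TopologicalSpace Y]
    (f : X → Y) (x η : X) (v : Y) : Prop :=
  ∀ (ηm : ℕ → X) (θm : ℕ → ℝ), Tendsto ηm atTop (𝓝 η) → (∀ m, θm m ≠ 0) →
    Tendsto θm atTop (𝓝 (0 : ℝ)) →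
    Tendsto (fun m => (θm m)⁻¹ • (f (x + θm m • ηm m) - f x)) atTop (𝓝 v)

/-- Partial chain differential of `F` with respect to the `i`-th coordinate,
at the point `z` in the direction `ξ`. -/
def HasPartialChainDiff {ι : Type*} [DecidableEq ι] {Y : ι → Type*} {Z : Type*}
    [∀ i, AddCommGroup (Y i)] [∀ i, Module ℝ (Y i)] [∀ i, TopologicalSpace (Y i)]
    [AddCommGroup Z] [Module ℝ Z] [TopologicalSpace Z]
    (F : (∀ i, Y i) → Z) (i : ι) (z : ∀ i, Y i) (ξ : Y i) (v : Z) : Prop :=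
  HasChainDiff (fun t => F (Function.update z i t)) (z i) ξ v

section AuxLemmas

open Set

variable {Z : Type*} [AddCommGroup Z] [Module ℝ Z] [TopologicalSpace Z] [IsTopologicalAddGroup Z]
    [ContinuousSMul ℝ Z] [LocallyConvexSpace ℝ Z]

/-- Sequential (chain-type) derivative of a curve `ψ : ℝ → Z` at `t`. -/
def HasSeqDeriv (ψ : ℝ → Z) (t : ℝ) (v : Z) : Prop :=
  ∀ s : ℕ → ℝ, (∀ n, s n ≠ 0) → Tendsto s atTop (𝓝 0) →
    Tendsto (fun n => (s n)⁻¹ • (ψ (t + s n) - ψ t)) atTop (𝓝 v)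

theorem HasSeqDeriv.clm {ψ : ℝ → Z} {t : ℝ} {v : Z} (h : HasSeqDeriv ψ t v) (ℓ : Z →L[ℝ] ℝ) :
    HasDerivAt (fun u => ℓ (ψ u)) (ℓ v) t := by
  rw [hasDerivAt_iff_tendsto_slope, tendsto_iff_seq_tendsto]
  intro u hu
  have hne : ∀ᶠ n in atTop, u n ≠ t := hu self_mem_nhdsWithin
  have hut : Tendsto u atTop (𝓝 t) := hu.mono_right nhdsWithin_le_nhds
  set s : ℕ → ℝ := fun n => if u n = t then ((n : ℝ) + 1)⁻¹ else u n - t with hs_def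
  have hs : ∀ n, s n ≠ 0 := by
    intro n
    by_cases hn : u n = t
    · simp only [hs_def, if_pos hn]
      positivity
    · simp only [hs_def, if_neg hn]
      exact sub_ne_zero.2 hn
  have hseq : ∀ᶠ n in atTop, s n = u n - t := by
    filter_upwards [hne] with n hn
    simp only [hs_def, if_neg hn]
  have hs0 : Tendsto s atTop (𝓝 0) := by
    refine Tendsto.congr' (hseq.mono fun n hn => hn.symm) ?_
    simpa using hut.sub_const t
  have hmain := h s hs hs0
  have hmain2 : Tendsto (fun n => (s n)⁻¹ * (ℓ (ψ (t + s n)) - ℓ (ψ t))) atTop (𝓝 (ℓ v)) := by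
    have := (ℓ.continuous.tendsto v).comp hmain
    refine this.congr fun n => ?_
    simp [map_smul, map_sub, smul_eq_mul]
  refine Tendsto.congr' ?_ hmain2
  filter_upwards [hne] with n hn
  have h1 : t + s n = u n := by simp [hs_def, if_neg hn]
  simp only [Function.comp_apply, slope_def_field]
  rw [div_eq_inv_mul]
  rw [show u n - t = s n by simp [hs_def, if_neg hn], h1]

/-- Mean value theorem: if a curve has sequential derivatives lying in a closed convex set `C`
on `[0,1]`, then the increment lies in `C`. -/
theorem seqDeriv_mem_closed_convex {ψ d : ℝ → Z} {C : Set Z}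
    (hconv : Convex ℝ C) (hclosed : IsClosed C)
    (hd : ∀ t ∈ Icc (0:ℝ) 1, HasSeqDeriv ψ t (d t))
    (hmem : ∀ t ∈ Icc (0:ℝ) 1, d t ∈ C) :
    ψ 1 - ψ 0 ∈ C := by
  by_contra hnot
  obtain ⟨f, u, hfC, hfx⟩ := geometric_hahn_banach_closed_point hconv hclosed hnot
  have hderiv : ∀ t ∈ Icc (0:ℝ) 1, HasDerivAt (fun s => f (ψ s)) (f (d t)) t :=
    fun t ht => (hd t ht).clm f
  have hcont : ContinuousOn (fun s => f (ψ s)) (Icc 0 1) :=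
    fun t ht => (hderiv t ht).continuousAt.continuousWithinAt
  obtain ⟨c, hc, hceq⟩ := exists_hasDerivAt_eq_slope (fun s => f (ψ s)) (fun t => f (d t))
    one_pos hcont (fun t ht => hderiv t (Ioo_subset_Icc_self ht))
  have h2 := hfC (d c) (hmem c (Ioo_subset_Icc_self hc))
  have h3 : f (ψ 1 - ψ 0) = f (ψ 1) - f (ψ 0) := map_sub f _ _
  rw [hceq] at h2
  simp only [sub_zero, div_one] at h2
  rw [h3] at hfx
  linarith

theorem exists_closed_convex_nhds {U : Set Z} (hU : U ∈ 𝓝 (0:Z)) :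
    ∃ W ∈ 𝓝 (0:Z), Convex ℝ W ∧ IsClosed W ∧ W ⊆ U := by
  obtain ⟨D, hD, hDc, hDU⟩ := exists_mem_nhds_isClosed_subset hU
  obtain ⟨C, ⟨hCn, hCc⟩, hCD⟩ := (LocallyConvexSpace.convex_basis (𝕜 := ℝ) (0:Z)).mem_iff.mp hD
  exact ⟨closure C, mem_of_superset hCn subset_closure, hCc.closure, isClosed_closure,
    (closure_minimal hCD hDc).trans hDU⟩

/-- Key one-coordinate lemma: the difference quotient of `F` along the `i`-th coordinate,
based at moving points `a m` converging to `z`, converges to the partial chain differential. -/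
theorem core_one_coord {ι : Type*} [DecidableEq ι] {Y : ι → Type*}
    [∀ i, AddCommGroup (Y i)] [∀ i, Module ℝ (Y i)] [∀ i, TopologicalSpace (Y i)]
    [∀ i, IsTopologicalAddGroup (Y i)] [∀ i, ContinuousSMul ℝ (Y i)]
    (F : (∀ i, Y i) → Z) (Ω : Set (∀ i, Y i)) (hΩ : IsOpen Ω)
    (i : ι) (DFi : (∀ j, Y j) → Y i → Z)
    (hDF : ∀ z ∈ Ω, ∀ ξ : Y i, HasPartialChainDiff F i z ξ (DFi z ξ))
    (hcont : ContinuousOn (fun p : (∀ j, Y j) × Y i => DFi p.1 p.2) (Ω ×ˢ (Set.univ : Set (Y i))))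
    (z : ∀ j, Y j) (hz : z ∈ Ω) (ξ : Y i)
    (a : ℕ → ∀ j, Y j) (ha : Tendsto a atTop (𝓝 z)) (hai : ∀ m, a m i = z i)
    (ξm : ℕ → Y i) (hξm : Tendsto ξm atTop (𝓝 ξ))
    (θm : ℕ → ℝ) (hθ : ∀ m, θm m ≠ 0) (hθ0 : Tendsto θm atTop (𝓝 (0:ℝ))) :
    Tendsto (fun m => (θm m)⁻¹ • (F (Function.update (a m) i (z i + θm m • ξm m)) - F (a m)))
      atTop (𝓝 (DFi z ξ)) := by
  rw [Filter.tendsto_def]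
  intro U hU
  set L := DFi z ξ with hL
  have hW0 : (fun w => L + w) ⁻¹' U ∈ 𝓝 (0:Z) := by
    have : ContinuousAt (fun w => L + w) (0:Z) := (continuous_add_left L).continuousAt
    have := this.preimage_mem_nhds (by rwa [add_zero] : U ∈ 𝓝 (L + 0))
    exact this
  obtain ⟨W, hWn, hWconv, hWcl, hWU⟩ := exists_closed_convex_nhds hW0
  set C : Set Z := (fun w => L + w) '' W with hC
  have hCconv : Convex ℝ C := hWconv.translate L
  have hCcl : IsClosed C := (Homeomorph.addLeft L).isClosedMap W hWcl
  have hCU : C ⊆ U := by rintro _ ⟨w, hw, rfl⟩; exact hWU hw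
  have hCn : C ∈ 𝓝 L := by
    have h : C ∈ Filter.map (fun w => L + w) (𝓝 (0:Z)) := Filter.image_mem_map hWn
    rwa [show Filter.map (fun w => L + w) (𝓝 (0:Z)) = 𝓝 L by
      simpa using map_add_left_nhds_zero (G := Z) L] at h
  have hca : ContinuousAt (fun p : (∀ j, Y j) × Y i => DFi p.1 p.2) (z, ξ) :=
    hcont.continuousAt ((hΩ.prod isOpen_univ).mem_nhds ⟨hz, trivial⟩)
  have hT : {p : (∀ j, Y j) × Y i | DFi p.1 p.2 ∈ C} ∈ 𝓝 (z, ξ) := hca.preimage_mem_nhds hCn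
  obtain ⟨A, hA, B, hB, hAB⟩ := mem_nhds_prod_iff.mp hT
  have hA' : A ∩ Ω ∈ 𝓝 z := inter_mem hA (hΩ.mem_nhds hz)
  set H : ((∀ j, Y j) × Y i × ℝ) → (∀ j, Y j) :=
    fun p => Function.update p.1 i (z i + p.2.2 • p.2.1) with hHdef
  have hHcont : Continuous H := by
    apply continuous_fst.update i
    exact continuous_const.add ((continuous_snd.snd).smul (continuous_snd.fst))
  have hHz : H (z, ξ, 0) = z := by
    simp [hHdef, Function.update_eq_self]
  have hHA : H ⁻¹' (A ∩ Ω) ∈ 𝓝 (z, ξ, (0:ℝ)) :=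
    hHcont.continuousAt.preimage_mem_nhds (by rwa [hHz])
  obtain ⟨P, hP, R, hR, hPR⟩ := mem_nhds_prod_iff.mp hHA
  obtain ⟨Q, hQ, I, hI, hQI⟩ := mem_nhds_prod_iff.mp hR
  obtain ⟨ε, hε, hball⟩ := Metric.mem_nhds_iff.mp hI
  have E1 : ∀ᶠ m in atTop, a m ∈ P := ha hP
  have E2 : ∀ᶠ m in atTop, ξm m ∈ Q ∩ B := hξm (inter_mem hQ hB)
  have E3 : ∀ᶠ m in atTop, |θm m| < ε := by
    have := Metric.tendsto_nhds.mp hθ0 ε hε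
    filter_upwards [this] with m hm
    simpa [Real.dist_eq] using hm
  filter_upwards [E1, E2, E3] with m hPm hQm hθm
  set S : ℝ → ∀ j, Y j := fun t => Function.update (a m) i (z i + (t * θm m) • ξm m) with hSdef
  have hSA : ∀ t ∈ Icc (0:ℝ) 1, S t ∈ A ∩ Ω := by
    intro t ht
    have htI : t * θm m ∈ I := by
      apply hball
      simp only [Metric.mem_ball, Real.dist_eq, sub_zero, abs_mul]
      calc |t| * |θm m| ≤ 1 * |θm m| := by
            apply mul_le_mul_of_nonneg_right _ (abs_nonneg _)
            rw [abs_le]; constructor <;> [linarith [ht.1]; linarith [ht.2]]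
        _ < ε := by rwa [one_mul]
    have hin : ((ξm m, t * θm m) : Y i × ℝ) ∈ R := hQI ⟨hQm.1, htI⟩
    exact hPR (⟨hPm, hin⟩ : ((a m, (ξm m, t * θm m)) : _ × Y i × ℝ) ∈ P ×ˢ R)
  set ψ : ℝ → Z := fun t => (θm m)⁻¹ • F (S t) with hψdef
  set d : ℝ → Z := fun t => DFi (S t) (ξm m) with hddef
  have hdmem : ∀ t ∈ Icc (0:ℝ) 1, d t ∈ C := by
    intro t ht
    exact hAB (⟨(hSA t ht).1, hQm.2⟩ : (S t, ξm m) ∈ A ×ˢ B)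
  have hseq : ∀ t ∈ Icc (0:ℝ) 1, HasSeqDeriv ψ t (d t) := by
    intro t ht s hs hs0
    have hcd := hDF (S t) (hSA t ht).2 (ξm m)
    have hθs : ∀ n, θm m * s n ≠ 0 := fun n => mul_ne_zero (hθ m) (hs n)
    have hθs0 : Tendsto (fun n => θm m * s n) atTop (𝓝 0) := by
      simpa using hs0.const_mul (θm m)
    have hmain := hcd (fun _ => ξm m) (fun n => θm m * s n) tendsto_const_nhds hθs hθs0
    refine hmain.congr fun n => ?_
    have h1 : Function.update (S t) i (S t i + (θm m * s n) • ξm m) = S (t + s n) := by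
      simp only [hSdef, Function.update_idem, Function.update_self]
      rw [add_assoc, ← add_smul,
        show t * θm m + θm m * s n = (t + s n) * θm m from by ring]
    have h2 : Function.update (S t) i (S t i) = S t := Function.update_eq_self i _
    show (θm m * s n)⁻¹ • (F (Function.update (S t) i (S t i + (θm m * s n) • ξm m))
        - F (Function.update (S t) i (S t i))) = (s n)⁻¹ • (ψ (t + s n) - ψ t)
    rw [h1, h2]
    show (θm m * s n)⁻¹ • (F (S (t + s n)) - F (S t))
        = (s n)⁻¹ • ((θm m)⁻¹ • F (S (t + s n)) - (θm m)⁻¹ • F (S t))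
    rw [← smul_sub, smul_smul, mul_inv_rev]
  have hfin := seqDeriv_mem_closed_convex hCconv hCcl hseq hdmem
  have hψ1 : ψ 1 - ψ 0
      = (θm m)⁻¹ • (F (Function.update (a m) i (z i + θm m • ξm m)) - F (a m)) := by
    have hS1 : S 1 = Function.update (a m) i (z i + θm m • ξm m) := by
      simp [hSdef, one_mul]
    have hS0 : S 0 = a m := by
      simp only [hSdef, zero_mul, zero_smul, add_zero, ← hai m]
      exact Function.update_eq_self i _
    simp only [hψdef, hS1, hS0, smul_sub]
  exact Set.mem_preimage.mpr (hψ1 ▸ hCU hfin)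

end AuxLemmas

/-- Chain rule for a multivariate outer function. -/
theorem chain_rule_multivariate_outer
    {X : Type*} {k : ℕ} {Y : Fin (k + 1) → Type*} {Z : Type*}
    [AddCommGroup X] [Module ℝ X] [TopologicalSpace X] [IsTopologicalAddGroup X]
    [ContinuousSMul ℝ X] [LocallyConvexSpace ℝ X]
    [∀ i, AddCommGroup (Y i)] [∀ i, Module ℝ (Y i)] [∀ i, TopologicalSpace (Y i)]
    [∀ i, IsTopologicalAddGroup (Y i)] [∀ i, ContinuousSMul ℝ (Y i)]
    [∀ i, LocallyConvexSpace ℝ (Y i)]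
    [AddCommGroup Z] [Module ℝ Z] [TopologicalSpace Z] [IsTopologicalAddGroup Z]
    [ContinuousSMul ℝ Z] [LocallyConvexSpace ℝ Z]
    (g : ∀ i, X → Y i) (x η : X) (Dg : ∀ i, Y i)
    (hg : ∀ i, HasChainDiff (g i) x η (Dg i))
    (F : (∀ i, Y i) → Z)
    (Ω : Set (∀ i, Y i)) (hΩ : IsOpen Ω) (hgx : (fun i => g i x) ∈ Ω)
    (DF : ∀ i, (∀ j, Y j) → Y i → Z)
    (hDF : ∀ i, ∀ z ∈ Ω, ∀ ξ : Y i, HasPartialChainDiff F i z ξ (DF i z ξ))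
    (hDFcont : ∀ i, ContinuousOn (fun p : (∀ j, Y j) × Y i => DF i p.1 p.2)
      (Ω ×ˢ (Set.univ : Set (Y i)))) :
    HasChainDiff (fun u => F (fun i => g i u)) x η
      (∑ i, DF i (fun j => g j x) (Dg i)) := by
  intro ηm θm hηm hθ hθ0
  set z : ∀ j, Y j := fun j => g j x with hzdef
  set ξm : ℕ → ∀ j, Y j := fun m j => (θm m)⁻¹ • (g j (x + θm m • ηm m) - g j x) with hξdef
  have hξ : ∀ j, Tendsto (fun m => ξm m j) atTop (𝓝 (Dg j)) := fun j => hg j ηm θm hηm hθ hθ0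
  have hkey : ∀ m j, g j (x + θm m • ηm m) = z j + θm m • ξm m j := by
    intro m j
    simp only [hξdef, hzdef]
    rw [smul_inv_smul₀ (hθ m)]
    abel
  set w : ℕ → ℕ → ∀ j, Y j :=
    fun m n j => if (j : ℕ) < n then g j (x + θm m • ηm m) else g j x with hwdef
  have hw0 : ∀ m, w m 0 = z := by
    intro m; funext j; simp [hwdef, hzdef]
  have hwtop : ∀ m, w m (k+1) = fun j => g j (x + θm m • ηm m) := by
    intro m; funext j; simp [hwdef, j.isLt]
  have hwii : ∀ m (i : Fin (k+1)), w m (i : ℕ) i = z i := by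
    intro m i; simp [hwdef, hzdef]
  have hstep : ∀ m (i : Fin (k+1)),
      w m ((i:ℕ)+1) = Function.update (w m (i:ℕ)) i (z i + θm m • ξm m i) := by
    intro m i; funext j
    rcases eq_or_ne j i with rfl | hne
    · rw [Function.update_self]
      simp only [hwdef]
      rw [if_pos (Nat.lt_succ_self _)]
      exact hkey m j
    · rw [Function.update_of_ne hne]
      have hv : (j:ℕ) ≠ (i:ℕ) := fun h => hne (Fin.ext h)
      simp only [hwdef]
      exact if_congr (by omega) rfl rfl
  have hwt : ∀ i : Fin (k+1), Tendsto (fun m => w m (i : ℕ)) atTop (𝓝 z) := by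
    intro i
    rw [tendsto_pi_nhds]
    intro j
    by_cases hj : (j:ℕ) < (i:ℕ)
    · have heq : ∀ m, w m (i : ℕ) j = z j + θm m • ξm m j := fun m => by
        simp only [hwdef, if_pos hj]; exact hkey m j
      rw [show (fun m => w m (i : ℕ) j) = fun m => z j + θm m • ξm m j from funext heq]
      have : Tendsto (fun m => z j + θm m • ξm m j) atTop (𝓝 (z j + (0:ℝ) • Dg j)) :=
        tendsto_const_nhds.add (hθ0.smul (hξ j))
      simpa using this
    · simp only [hwdef, if_neg hj]
      exact tendsto_const_nhds
  have hterm : ∀ i : Fin (k+1),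
      Tendsto (fun m => (θm m)⁻¹ • (F (w m ((i:ℕ)+1)) - F (w m (i:ℕ)))) atTop
        (𝓝 (DF i z (Dg i))) := by
    intro i
    have hcore := core_one_coord F Ω hΩ i (DF i) (hDF i) (hDFcont i) z hgx (Dg i)
      (fun m => w m (i : ℕ)) (hwt i) (fun m => hwii m i) (fun m => ξm m i) (hξ i) θm hθ hθ0
    refine hcore.congr fun m => ?_
    rw [← hstep m i]
  have hsum := tendsto_finset_sum Finset.univ (fun (i : Fin (k+1)) (_ : i ∈ Finset.univ) => hterm i)
  refine hsum.congr fun m => ?_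
  rw [← Finset.smul_sum]
  congr 1
  rw [Fin.sum_univ_eq_sum_range (fun n => F (w m (n+1)) - F (w m n)) (k+1),
    Finset.sum_range_sub (fun n => F (w m n)), hwtop m, hw0 m]
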